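/- Let h ≥ n ≥ 1 be integers, set m = h − n + 1, and let w : {1,…,h} × {1,…,n} → R be any function into a commutative ring. Then the sum over all (n−1)-tuples (π₁,…,π_{n−1}) ∈ Π^{(n−1)}_{h,n} of the product of w(i,j) over all grid points (i,j) NOT belonging to π₁ ∪ ⋯ ∪ π_{n−1} equals the sum over all φ = (j₁,…,j_m) ∈ Φ_{m,n} of ∏_{k=1}^{m} w(k + j_k − 1, n − j_k + 1). -/

import Mathlib

open Finset

/-- `S` is the vertex set of an up/right lattice path from `(1, a)` to `(h, b)`. -/
def IsUpRightPath (h a b : ℕ) (S : Finset (ℕ × ℕ)) : Prop :=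
  ∃ (L : ℕ) (p : ℕ → ℕ × ℕ),
    p 0 = (1, a) ∧ p L = (h, b) ∧
    (∀ k, k < L → p (k + 1) = ((p k).1 + 1, (p k).2) ∨ p (k + 1) = ((p k).1, (p k).2 + 1)) ∧
    S = (Finset.range (L + 1)).image p

/-- `PiTuples h n r k` is the set `Π^{(r)}_{h,k}` of `r`-tuples of pairwise vertex-disjoint
up/right lattice paths in `{1,…,h} × {1,…,n}`, where the `i`-th path (for `i : Fin r`,
playing the role of `i+1 ∈ {1,…,r}`) goes from `(1, i+1)` to `(h, k - r + (i+1))`. -/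
noncomputable def PiTuples (h n r k : ℕ) : Finset (Fin r → Finset (ℕ × ℕ)) :=
  @Finset.filter _
    (fun π => (∀ i : Fin r, IsUpRightPath h (i.1 + 1) (k - r + (i.1 + 1)) (π i)) ∧
      Pairwise fun i j : Fin r => Disjoint (π i) (π j))
    (Classical.decPred _)
    (Fintype.piFinset fun _ : Fin r => (Finset.Icc 1 h ×ˢ Finset.Icc 1 n).powerset)

/-- `Phi m n` is the set `Φ_{m,n}` of `m`-tuples `(j₁,…,j_m)` of integers with
`1 ≤ j₁ ≤ j₂ ≤ ⋯ ≤ j_m ≤ n` (indexed by `Fin m`). -/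
noncomputable def Phi (m n : ℕ) : Finset (Fin m → ℕ) :=
  @Finset.filter _ Monotone (Classical.decPred _)
    (Fintype.piFinset fun _ : Fin m => Finset.Icc 1 n)

/-! ### Auxiliary development -/

def pathSet (h a c : ℕ) : Finset (ℕ × ℕ) :=
  (Finset.Icc 1 c ×ˢ {a}) ∪ (Finset.Icc c h ×ˢ {a + 1})

lemma mem_pathSet {h a c : ℕ} {q : ℕ × ℕ} :
    q ∈ pathSet h a c ↔
      (1 ≤ q.1 ∧ q.1 ≤ c ∧ q.2 = a) ∨ (c ≤ q.1 ∧ q.1 ≤ h ∧ q.2 = a + 1) := by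
  cases q with
  | mk x y =>
    simp only [pathSet, Finset.mem_union, Finset.mem_product, Finset.mem_Icc,
      Finset.mem_singleton]
    constructor
    · rintro (⟨h1, h2⟩ | ⟨h1, h2⟩) <;> omega
    · rintro (⟨h1, h2, h3⟩ | ⟨h1, h2, h3⟩) <;> omega

lemma upRightPath_structure {h a : ℕ} {S : Finset (ℕ × ℕ)}
    (hS : IsUpRightPath h a (a + 1) S) :
    ∃ c, 1 ≤ c ∧ c ≤ h ∧ S = pathSet h a c := by
  obtain ⟨L, p, h0, hL, hstep, rfl⟩ := hS
  have mono2 : ∀ k l, k ≤ l → l ≤ L → (p k).2 ≤ (p l).2 := by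
    intro k l hkl hlL
    induction l with
    | zero =>
      have : k = 0 := by omega
      subst this; exact le_rfl
    | succ l ih =>
      rcases Nat.eq_or_lt_of_le hkl with heq | hlt
      · subst heq; exact le_rfl
      · have h1 : (p k).2 ≤ (p l).2 := ih (by omega) (by omega)
        have h2 : (p l).2 ≤ (p (l + 1)).2 := by
          rcases hstep l (by omega) with hc | hc <;> rw [hc] <;> simp
        exact le_trans h1 h2
  have hsum : ∀ k, k ≤ L → (p k).1 + (p k).2 = 1 + a + k := by
    intro k hk
    induction k with
    | zero => rw [h0]; simp
    | succ k ih =>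
      have hih := ih (by omega)
      rcases hstep k (by omega) with hc | hc <;> rw [hc] <;> simp <;> omega
  have hL1 : (p L).1 = h := by rw [hL]
  have hL2 : (p L).2 = a + 1 := by rw [hL]
  have hLh : L = h := by have := hsum L le_rfl; omega
  have hex : ∃ k, k ≤ L ∧ (p k).2 = a + 1 := ⟨L, le_rfl, hL2⟩
  obtain ⟨htL, ht2⟩ := Nat.find_spec hex
  set t := Nat.find hex with ht
  have ht1 : 1 ≤ t := by
    rcases Nat.eq_zero_or_pos t with h' | h'
    · exfalso
      have : (p 0).2 = a + 1 := by rw [← h']; exact ht2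
      rw [h0] at this
      simp at this
    · exact h'
  have hval : ∀ k, k ≤ L → p k = if k < t then (k + 1, a) else (k, a + 1) := by
    intro k hk
    have h2low : a ≤ (p k).2 := by
      have := mono2 0 k (by omega) hk; rw [h0] at this; exact this
    have h2high : (p k).2 ≤ a + 1 := by
      have := mono2 k L hk le_rfl; rw [hL2] at this; exact this
    by_cases hkt : k < t
    · have hne : (p k).2 ≠ a + 1 := fun hcon => Nat.find_min hex hkt ⟨hk, hcon⟩
      have h2 : (p k).2 = a := by omega
      have h1 : (p k).1 = k + 1 := by have := hsum k hk; omega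
      rw [if_pos hkt]; exact Prod.ext h1 h2
    · have h2 : (p k).2 = a + 1 := by
        have := mono2 t k (by omega) hk
        rw [ht2] at this
        omega
      have h1 : (p k).1 = k := by have := hsum k hk; omega
      rw [if_neg hkt]; exact Prod.ext h1 h2
  refine ⟨t, ht1, by omega, ?_⟩
  ext q
  cases q with
  | mk x y =>
  simp only [Finset.mem_image, Finset.mem_range, mem_pathSet]
  constructor
  · rintro ⟨k, hk, hpk⟩
    have hkL : k ≤ L := by omega
    rw [hval k hkL] at hpk
    by_cases hkt : k < t
    · rw [if_pos hkt, Prod.mk.injEq] at hpk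
      omega
    · rw [if_neg hkt, Prod.mk.injEq] at hpk
      omega
  · rintro (⟨hx1, hx2, rfl⟩ | ⟨hx1, hx2, rfl⟩)
    · refine ⟨x - 1, by omega, ?_⟩
      rw [hval (x - 1) (by omega), if_pos (by omega), Prod.mk.injEq]
      omega
    · refine ⟨x, by omega, ?_⟩
      rw [hval x (by omega), if_neg (by omega)]

def stdPath (a c k : ℕ) : ℕ × ℕ := if k < c then (k + 1, a) else (k, a + 1)

lemma pathSet_isUpRightPath {h a c : ℕ} (h1 : 1 ≤ c) (h2 : c ≤ h) :
    IsUpRightPath h a (a + 1) (pathSet h a c) := by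
  refine ⟨h, stdPath a c, ?_, ?_, ?_, ?_⟩
  · rw [stdPath, if_pos (by omega : 0 < c)]
  · rw [stdPath, if_neg (by omega : ¬ h < c)]
  · intro k hk
    by_cases hc1 : k + 1 < c
    · left; rw [stdPath, stdPath, if_pos (by omega : k < c), if_pos hc1]
    · by_cases hc2 : k < c
      · right; rw [stdPath, stdPath, if_pos hc2, if_neg hc1]
      · left; rw [stdPath, stdPath, if_neg hc2, if_neg (by omega : ¬ k + 1 < c)]
  · ext q
    cases q with
    | mk x y =>
    simp only [mem_pathSet, Finset.mem_image, Finset.mem_range, stdPath]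
    constructor
    · rintro (⟨hx1, hx2, rfl⟩ | ⟨hx1, hx2, rfl⟩)
      · refine ⟨x - 1, by omega, ?_⟩
        rw [if_pos (by omega), Prod.mk.injEq]
        omega
      · refine ⟨x, by omega, ?_⟩
        rw [if_neg (by omega)]
    · rintro ⟨k, hk, hpk⟩
      by_cases hkc : k < c
      · rw [if_pos hkc, Prod.mk.injEq] at hpk
        omega
      · rw [if_neg hkc, Prod.mk.injEq] at hpk
        omega

lemma pathSet_subset_grid {h n a c : ℕ} (ha : 1 ≤ a) (han : a + 1 ≤ n) (hc1 : 1 ≤ c)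
    (hch : c ≤ h) :
    pathSet h a c ⊆ Finset.Icc 1 h ×ˢ Finset.Icc 1 n := by
  intro q hq
  rw [mem_pathSet] at hq
  rw [Finset.mem_product, Finset.mem_Icc, Finset.mem_Icc]
  omega

lemma pathSet_disjoint {h a a' c c' : ℕ} (haa : a < a') (hadj : a' = a + 1 → c' < c) :
    Disjoint (pathSet h a c) (pathSet h a' c') := by
  rw [Finset.disjoint_left]
  intro q hq hq'
  rw [mem_pathSet] at hq hq'
  omega

lemma lt_of_pathSet_disjoint {h a c c' : ℕ} (hc : 1 ≤ c) (hch : c ≤ h) (hc' : 1 ≤ c')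
    (hd : Disjoint (pathSet h a c) (pathSet h (a + 1) c')) : c' < c := by
  by_contra hcon
  have h1 : ((c : ℕ), a + 1) ∈ pathSet h a c := mem_pathSet.2 (Or.inr ⟨le_refl c, hch, rfl⟩)
  have h2 : ((c : ℕ), a + 1) ∈ pathSet h (a + 1) c' := mem_pathSet.2 (Or.inl ⟨hc, by omega, rfl⟩)
  exact Finset.disjoint_left.1 hd h1 h2

lemma mem_piTuples_iff {h n : ℕ} (hn : 1 ≤ n) (hnh : n ≤ h)
    {π : Fin (n - 1) → Finset (ℕ × ℕ)} :
    π ∈ PiTuples h n (n - 1) n ↔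
      ∃ c : Fin (n - 1) → ℕ,
        (∀ i, 1 ≤ c i ∧ c i ≤ h) ∧
        (∀ i i' : Fin (n - 1), i.1 < i'.1 → c i' < c i) ∧
        (∀ i, π i = pathSet h (i.1 + 1) (c i)) := by
  simp only [PiTuples, Finset.mem_filter, Fintype.mem_piFinset]
  constructor
  · rintro ⟨hsub, hpath, hdisj⟩
    have hpath' : ∀ i : Fin (n - 1), IsUpRightPath h (i.1 + 1) ((i.1 + 1) + 1) (π i) := by
      intro i
      have := hpath i
      rwa [show n - (n - 1) + (i.1 + 1) = (i.1 + 1) + 1 by omega] at this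
    choose c hc1 hc2 hc3 using fun i => upRightPath_structure (hpath' i)
    have adj : ∀ i i' : Fin (n - 1), i'.1 = i.1 + 1 → c i' < c i := by
      intro i i' hii
      have hne : i ≠ i' := by
        intro hcon; rw [hcon] at hii; omega
      have hd : Disjoint (π i) (π i') := hdisj hne
      rw [hc3 i, hc3 i'] at hd
      rw [show i'.1 + 1 = (i.1 + 1) + 1 by omega] at hd
      exact lt_of_pathSet_disjoint (hc1 i) (hc2 i) (hc1 i') hd
    have gen : ∀ d (i i' : Fin (n - 1)), i'.1 = i.1 + 1 + d → c i' < c i := by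
      intro d
      induction d with
      | zero => exact fun i i' hii => adj i i' (by omega)
      | succ d ih =>
        intro i i' hii
        have hi'2 := i'.2
        have hmid : i.1 + 1 < n - 1 := by omega
        refine lt_trans (ih ⟨i.1 + 1, hmid⟩ i' ?_) (adj i ⟨i.1 + 1, hmid⟩ rfl)
        show i'.1 = i.1 + 1 + 1 + d
        omega
    refine ⟨c, fun i => ⟨hc1 i, hc2 i⟩, ?_, hc3⟩
    intro i i' hii
    exact gen (i'.1 - i.1 - 1) i i' (by omega)
  · rintro ⟨c, hbd, hstrict, hpi⟩
    refine ⟨?_, ?_, ?_⟩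
    · intro i
      rw [Finset.mem_powerset, hpi i]
      exact pathSet_subset_grid (by omega) (by have := i.2; omega) (hbd i).1 (hbd i).2
    · intro i
      rw [hpi i, show n - (n - 1) + (i.1 + 1) = (i.1 + 1) + 1 by omega]
      exact pathSet_isUpRightPath (hbd i).1 (hbd i).2
    · intro i i' hne
      have hvne : i.1 ≠ i'.1 := fun hcon => hne (Fin.ext hcon)
      rw [hpi i, hpi i']
      rcases Nat.lt_or_ge i.1 i'.1 with hlt | hge
      · exact pathSet_disjoint (by omega) (fun _ => hstrict i i' hlt)
      · have hlt' : i'.1 < i.1 := by omega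
        exact (pathSet_disjoint (by omega) (fun _ => hstrict i' i hlt')).symm

lemma mem_Phi_iff {m n : ℕ} {j : Fin m → ℕ} :
    j ∈ Phi m n ↔ Monotone j ∧ ∀ k, 1 ≤ j k ∧ j k ≤ n := by
  simp only [Phi, Finset.mem_filter, Fintype.mem_piFinset]
  simp only [Finset.mem_Icc]
  tauto

lemma card_filter_fin_le (N t : ℕ) :
    ((Finset.univ : Finset (Fin N)).filter fun i => t ≤ i.1).card = N - t := by
  induction N with
  | zero => simp
  | succ N ih =>
    rw [Finset.card_filter, Fin.sum_univ_castSucc]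
    simp only [Fin.coe_castSucc, Fin.val_last]
    rw [← Finset.card_filter, ih]
    split_ifs <;> omega

lemma card_filter_fin_lt (N t : ℕ) :
    ((Finset.univ : Finset (Fin N)).filter fun i => i.1 < t).card = min t N := by
  have h1 := Finset.card_filter_add_card_filter_not
    (s := (Finset.univ : Finset (Fin N))) (p := fun i => t ≤ i.1)
  have h2 : ((Finset.univ : Finset (Fin N)).filter fun i => ¬ t ≤ i.1)
      = (Finset.univ : Finset (Fin N)).filter fun i => i.1 < t :=
    Finset.filter_congr (fun i _ => by omega)
  rw [card_filter_fin_le, h2, Finset.card_univ, Fintype.card_fin] at h1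
  omega

def Acnt {m : ℕ} (j : Fin m → ℕ) (v : ℕ) : ℕ :=
  ((Finset.univ : Finset (Fin m)).filter fun l => j l ≤ v).card

lemma Acnt_le_iff {m : ℕ} {j : Fin m → ℕ} (hj : Monotone j) (k : Fin m) (v : ℕ) :
    Acnt j v ≤ k.1 ↔ v < j k := by
  constructor
  · intro hA
    by_contra hcon
    push_neg at hcon
    have hsub : ((Finset.univ : Finset (Fin m)).filter fun l => l.1 ≤ k.1)
        ⊆ (Finset.univ : Finset (Fin m)).filter fun l => j l ≤ v := by
      intro l hl
      simp only [Finset.mem_filter, Finset.mem_univ, true_and] at hl ⊢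
      exact le_trans (hj (Fin.le_def.mpr hl)) hcon
    have hcard := Finset.card_le_card hsub
    have hk := k.2
    have hlt : ((Finset.univ : Finset (Fin m)).filter fun l => l.1 ≤ k.1)
        = (Finset.univ : Finset (Fin m)).filter fun l => l.1 < k.1 + 1 :=
      Finset.filter_congr (fun i _ => by omega)
    rw [hlt, card_filter_fin_lt] at hcard
    unfold Acnt at hA
    omega
  · intro hv
    have hsub : ((Finset.univ : Finset (Fin m)).filter fun l => j l ≤ v)
        ⊆ (Finset.univ : Finset (Fin m)).filter fun l => l.1 < k.1 := by
      intro l hl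
      simp only [Finset.mem_filter, Finset.mem_univ, true_and] at hl ⊢
      by_contra hcon
      push_neg at hcon
      have : j k ≤ j l := hj (Fin.le_def.mpr hcon)
      omega
    have hcard := Finset.card_le_card hsub
    rw [card_filter_fin_lt] at hcard
    have hk := k.2
    unfold Acnt
    omega

lemma Acnt_mono {m : ℕ} (j : Fin m → ℕ) {v v' : ℕ} (hvv : v ≤ v') : Acnt j v ≤ Acnt j v' :=
  Finset.card_le_card (Finset.monotone_filter_right _ fun l _ hl => le_trans hl hvv)

lemma Acnt_le_card {m : ℕ} (j : Fin m → ℕ) (v : ℕ) : Acnt j v ≤ m := by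
  have := Finset.card_le_card (Finset.filter_subset (fun l => j l ≤ v) Finset.univ)
  rwa [Finset.card_univ, Fintype.card_fin] at this

lemma Acnt_zero {m : ℕ} {j : Fin m → ℕ} (hj : ∀ k, 1 ≤ j k) : Acnt j 0 = 0 := by
  unfold Acnt
  rw [Finset.card_eq_zero, Finset.filter_eq_empty_iff]
  intro l _
  have := hj l
  omega

lemma Acnt_top {m n : ℕ} {j : Fin m → ℕ} (hj : ∀ k, j k ≤ n) : Acnt j n = m := by
  unfold Acnt
  rw [Finset.filter_true_of_mem (fun l _ => hj l), Finset.card_univ, Fintype.card_fin]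

def cOf (n : ℕ) {m : ℕ} (j : Fin m → ℕ) (i : Fin (n - 1)) : ℕ :=
  Acnt j (n - 1 - i.1) + (n - 1 - i.1)

def jOf (n m : ℕ) (c : Fin (n - 1) → ℕ) (k : Fin m) : ℕ :=
  1 + ((Finset.univ : Finset (Fin (n - 1))).filter fun i => c i ≤ k.1 + (n - 1 - i.1)).card

lemma jOf_cOf {n m : ℕ} (hn : 1 ≤ n) {j : Fin m → ℕ} (hmono : Monotone j)
    (hbd : ∀ k, 1 ≤ j k ∧ j k ≤ n) (k : Fin m) :
    jOf n m (cOf n j) k = j k := by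
  unfold jOf cOf
  have hcongr : ((Finset.univ : Finset (Fin (n - 1))).filter
        fun i => Acnt j (n - 1 - i.1) + (n - 1 - i.1) ≤ k.1 + (n - 1 - i.1))
      = (Finset.univ : Finset (Fin (n - 1))).filter fun i => n - j k ≤ i.1 := by
    apply Finset.filter_congr
    intro i _
    have hiff := Acnt_le_iff hmono k (n - 1 - i.1)
    have h1 := (hbd k).1
    have h2 := (hbd k).2
    have hi := i.2
    constructor
    · intro hle
      have hle' : Acnt j (n - 1 - i.1) ≤ k.1 := by omega
      have := hiff.1 hle'
      omega
    · intro hge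
      have hlt : n - 1 - i.1 < j k := by omega
      have := hiff.2 hlt
      omega
  rw [hcongr, card_filter_fin_le]
  have h1 := (hbd k).1
  have h2 := (hbd k).2
  omega

lemma gap_of_strict {n : ℕ} {c : Fin (n - 1) → ℕ}
    (hstrict : ∀ i i' : Fin (n - 1), i.1 < i'.1 → c i' < c i) :
    ∀ (d : ℕ) (i i' : Fin (n - 1)), i'.1 = i.1 + d → c i' + d ≤ c i := by
  intro d
  induction d with
  | zero =>
    intro i i' hd
    have : i = i' := Fin.ext (by omega)
    rw [this]
    omega
  | succ d ih =>
    intro i i' hd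
    have hi'2 := i'.2
    have hmid : i.1 + d < n - 1 := by omega
    have h1 := ih i ⟨i.1 + d, hmid⟩ rfl
    have h2 := hstrict ⟨i.1 + d, hmid⟩ i' (show i.1 + d < i'.1 by omega)
    omega

lemma cOf_jOf {h n m : ℕ} (hn : 1 ≤ n) (hnh : n ≤ h) (hm : m = h - n + 1)
    {c : Fin (n - 1) → ℕ} (hbd : ∀ i, 1 ≤ c i ∧ c i ≤ h)
    (hstrict : ∀ i i' : Fin (n - 1), i.1 < i'.1 → c i' < c i) (i₀ : Fin (n - 1)) :
    cOf n (jOf n m c) i₀ = c i₀ := by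
  have hgap := gap_of_strict hstrict
  unfold cOf
  set v := n - 1 - i₀.1 with hv
  have hi₀ := i₀.2
  have hv1 : 1 ≤ v := by omega
  have hvn : v ≤ n - 1 := by omega
  have hlow : v ≤ c i₀ := by
    have hlast : n - 2 < n - 1 := by omega
    have hg := hgap (n - 2 - i₀.1) i₀ ⟨n - 2, hlast⟩ (show n - 2 = i₀.1 + (n - 2 - i₀.1) by omega)
    have hb := (hbd ⟨n - 2, hlast⟩).1
    omega
  have hhigh : c i₀ + i₀.1 ≤ h := by
    have h0 : (0 : ℕ) < n - 1 := by omega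
    have hg := hgap i₀.1 ⟨0, h0⟩ i₀ (show i₀.1 = 0 + i₀.1 by omega)
    have hb := (hbd ⟨0, h0⟩).2
    omega
  have hkey : ∀ k : Fin m, jOf n m c k ≤ v ↔ k.1 + v < c i₀ := by
    intro k
    unfold jOf
    constructor
    · intro hle
      by_contra hcon
      push_neg at hcon
      have hsub : ((Finset.univ : Finset (Fin (n - 1))).filter fun i => n - 1 - v ≤ i.1)
          ⊆ (Finset.univ : Finset (Fin (n - 1))).filter
              fun i => c i ≤ k.1 + (n - 1 - i.1) := by
        intro i hi
        simp only [Finset.mem_filter, Finset.mem_univ, true_and] at hi ⊢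
        have hg := hgap (i.1 - i₀.1) i₀ i (by omega)
        have hi2 := i.2
        omega
      have hcard := Finset.card_le_card hsub
      rw [card_filter_fin_le] at hcard
      omega
    · intro hlt
      have hsub : ((Finset.univ : Finset (Fin (n - 1))).filter
            fun i => c i ≤ k.1 + (n - 1 - i.1))
          ⊆ (Finset.univ : Finset (Fin (n - 1))).filter fun i => n - v ≤ i.1 := by
        intro i hi
        simp only [Finset.mem_filter, Finset.mem_univ, true_and] at hi ⊢
        by_contra hcon
        push_neg at hcon
        have hg := hgap (i₀.1 - i.1) i i₀ (by omega)
        have hi2 := i.2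
        omega
      have hcard := Finset.card_le_card hsub
      rw [card_filter_fin_le] at hcard
      omega
  have hAeq : Acnt (jOf n m c) v = c i₀ - v := by
    unfold Acnt
    have heq : ((Finset.univ : Finset (Fin m)).filter fun k => jOf n m c k ≤ v)
        = (Finset.univ : Finset (Fin m)).filter fun k => k.1 < c i₀ - v := by
      apply Finset.filter_congr
      intro k _
      rw [hkey k]
      omega
    rw [heq, card_filter_fin_lt]
    omega
  rw [hAeq]
  omega

def cExtract {n : ℕ} (π : Fin (n - 1) → Finset (ℕ × ℕ)) (i : Fin (n - 1)) : ℕ :=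
  ((π i).filter fun q => q.2 = i.1 + 1).card

lemma cExtract_pathSet {h n : ℕ} {c : Fin (n - 1) → ℕ}
    {π : Fin (n - 1) → Finset (ℕ × ℕ)}
    (hpi : ∀ i, π i = pathSet h (i.1 + 1) (c i)) (i : Fin (n - 1)) :
    cExtract π i = c i := by
  unfold cExtract
  rw [hpi i]
  have heq : (pathSet h (i.1 + 1) (c i)).filter (fun q => q.2 = i.1 + 1)
      = Finset.Icc 1 (c i) ×ˢ {i.1 + 1} := by
    ext q
    simp only [Finset.mem_filter, mem_pathSet, Finset.mem_product, Finset.mem_Icc,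
      Finset.mem_singleton]
    omega
  rw [heq, Finset.card_product, Nat.card_Icc, Finset.card_singleton]
  omega

lemma jOf_mem_Phi {n m : ℕ} (hn : 1 ≤ n) (c : Fin (n - 1) → ℕ) :
    jOf n m c ∈ Phi m n := by
  rw [mem_Phi_iff]
  constructor
  · intro k k' hkk
    unfold jOf
    have hkk' : k.1 ≤ k'.1 := hkk
    apply Nat.add_le_add_left
    apply Finset.card_le_card
    apply Finset.monotone_filter_right
    intro i hi
    omega
  · intro k
    unfold jOf
    have hcard : ((Finset.univ : Finset (Fin (n - 1))).filter
        fun i => c i ≤ k.1 + (n - 1 - i.1)).card ≤ n - 1 := by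
      have := Finset.card_le_card
        (Finset.filter_subset (fun i : Fin (n - 1) => c i ≤ k.1 + (n - 1 - i.1)) Finset.univ)
      rwa [Finset.card_univ, Fintype.card_fin] at this
    omega

lemma complement_biUnion {h n : ℕ} (hn : 1 ≤ n) (hnh : n ≤ h)
    {c : Fin (n - 1) → ℕ} {j : Fin (h - n + 1) → ℕ}
    (hmono : Monotone j) (hbd : ∀ k, 1 ≤ j k ∧ j k ≤ n)
    (hc : ∀ i, c i = cOf n j i) :
    (Finset.Icc 1 h ×ˢ Finset.Icc 1 n) \
        Finset.univ.biUnion (fun i : Fin (n - 1) => pathSet h (i.1 + 1) (c i))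
      = Finset.univ.image fun k : Fin (h - n + 1) => (k.1 + 1 + j k - 1, n - j k + 1) := by
  ext q
  cases q with
  | mk x y =>
  simp only [Finset.mem_sdiff, Finset.mem_biUnion, Finset.mem_univ, true_and,
    Finset.mem_product, Finset.mem_Icc, Finset.mem_image, mem_pathSet, not_exists]
  constructor
  · rintro ⟨⟨⟨hx1, hxh⟩, hy1, hyn⟩, hnc⟩
    set v := n + 1 - y with hv
    have hv1 : 1 ≤ v := by omega
    have hvn : v ≤ n := by omega
    have hlower : Acnt j (v - 1) + (v - 1) < x := by
      by_cases hy : y ≤ n - 1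
      · have hi : y - 1 < n - 1 := by omega
        have hni := hnc ⟨y - 1, hi⟩
        have hvali : (⟨y - 1, hi⟩ : Fin (n - 1)).1 = y - 1 := rfl
        have hA := hc ⟨y - 1, hi⟩
        unfold cOf at hA
        rw [show n - 1 - (⟨y - 1, hi⟩ : Fin (n - 1)).1 = v - 1 from by
          show n - 1 - (y - 1) = v - 1; omega] at hA
        omega
      · have hveq : v - 1 = 0 := by omega
        rw [hveq, Acnt_zero (fun k => (hbd k).1)]
        omega
    have hupper : x < Acnt j v + v := by
      by_cases hy : 2 ≤ y
      · have hi : y - 2 < n - 1 := by omega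
        have hni := hnc ⟨y - 2, hi⟩
        have hvali : (⟨y - 2, hi⟩ : Fin (n - 1)).1 = y - 2 := rfl
        have hA := hc ⟨y - 2, hi⟩
        unfold cOf at hA
        rw [show n - 1 - (⟨y - 2, hi⟩ : Fin (n - 1)).1 = v from by
          show n - 1 - (y - 2) = v; omega] at hA
        omega
      · have hveq : v = n := by omega
        rw [hveq, Acnt_top (fun k => (hbd k).2)]
        omega
    have hAv := Acnt_le_card j v
    have hk : x - v < h - n + 1 := by omega
    refine ⟨⟨x - v, hk⟩, ?_⟩
    have hjk : j ⟨x - v, hk⟩ = v := by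
      have h1 : ¬ Acnt j v ≤ x - v := by omega
      have h2 := Acnt_le_iff hmono ⟨x - v, hk⟩ v
      have h3 := Acnt_le_iff hmono ⟨x - v, hk⟩ (v - 1)
      have h4 : Acnt j (v - 1) ≤ (⟨x - v, hk⟩ : Fin (h - n + 1)).1 := by
        show Acnt j (v - 1) ≤ x - v
        omega
      have h5 := h3.1 h4
      have h6 : ¬ v < j ⟨x - v, hk⟩ := fun hcon => h1 (h2.2 hcon)
      omega
    rw [hjk, Prod.mk.injEq]
    constructor
    · show x - v + 1 + v - 1 = x
      omega
    · omega
  · rintro ⟨k, hkeq⟩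
    rw [Prod.mk.injEq] at hkeq
    obtain ⟨hxeq, hyeq⟩ := hkeq
    have hj1 := (hbd k).1
    have hj2 := (hbd k).2
    have hkm := k.2
    refine ⟨by omega, fun i => ?_⟩
    have hA := hc i
    unfold cOf at hA
    have hi2 := i.2
    intro hcon
    rcases hcon with ⟨hx1, hxc, hy⟩ | ⟨hcx, hxh, hy⟩
    · have hidx : n - 1 - i.1 = j k - 1 := by omega
      rw [hidx] at hA
      have := (Acnt_le_iff hmono k (j k - 1)).2 (by omega)
      omega
    · have hidx : n - 1 - i.1 = j k := by omega
      rw [hidx] at hA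
      have hiff := Acnt_le_iff hmono k (j k)
      have hnA : ¬ Acnt j (j k) ≤ k.1 := fun hcon2 => by
        have := hiff.1 hcon2
        omega
      omega

theorem sum_complement_piTuples_eq_sum_Phi {R : Type*} [CommRing R]
    (h n : ℕ) (hn : 1 ≤ n) (hnh : n ≤ h) (w : ℕ × ℕ → R) :
    ∑ π ∈ PiTuples h n (n - 1) n,
        ∏ q ∈ (Finset.Icc 1 h ×ˢ Finset.Icc 1 n) \ Finset.univ.biUnion π, w q
      = ∑ j ∈ Phi (h - n + 1) n,
          ∏ k : Fin (h - n + 1), w (k.1 + 1 + j k - 1, n - j k + 1) := by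
  refine Finset.sum_nbij' (fun π => jOf n (h - n + 1) (cExtract π))
    (fun jf => fun i : Fin (n - 1) => pathSet h (i.1 + 1) (cOf n jf i))
    ?_ ?_ ?_ ?_ ?_
  · exact fun π _ => jOf_mem_Phi hn _
  · intro jf hjf
    rw [mem_Phi_iff] at hjf
    rw [mem_piTuples_iff hn hnh]
    refine ⟨cOf n jf, ?_, ?_, fun i => rfl⟩
    · intro i
      have hi := i.2
      have hle := Acnt_le_card jf (n - 1 - i.1)
      unfold cOf
      omega
    · intro i i' hii
      unfold cOf
      have hmA := Acnt_mono jf (show n - 1 - i'.1 ≤ n - 1 - i.1 by omega)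
      have hi' := i'.2
      omega
  · intro π hπ
    rw [mem_piTuples_iff hn hnh] at hπ
    obtain ⟨c, hbd, hstrict, hpi⟩ := hπ
    have hce : cExtract π = c := funext (cExtract_pathSet hpi)
    funext i
    rw [hce, cOf_jOf hn hnh rfl hbd hstrict i, ← hpi i]
  · intro jf hjf
    rw [mem_Phi_iff] at hjf
    have hce : cExtract (fun i : Fin (n - 1) => pathSet h (i.1 + 1) (cOf n jf i)) = cOf n jf :=
      funext (cExtract_pathSet (fun i => rfl))
    rw [hce]
    funext k
    exact jOf_cOf hn hjf.1 hjf.2 k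
  · intro π hπ
    rw [mem_piTuples_iff hn hnh] at hπ
    obtain ⟨c, hbd, hstrict, hpi⟩ := hπ
    have hce : cExtract π = c := funext (cExtract_pathSet hpi)
    rw [hce]
    set jf := jOf n (h - n + 1) c with hjf
    have hjfPhi := jOf_mem_Phi (m := h - n + 1) hn c
    rw [← hjf, mem_Phi_iff] at hjfPhi
    have hcc : ∀ i, c i = cOf n jf i := fun i => (cOf_jOf hn hnh rfl hbd hstrict i).symm
    have hπeq : π = fun i : Fin (n - 1) => pathSet h (i.1 + 1) (c i) := funext hpi
    rw [hπeq, complement_biUnion hn hnh hjfPhi.1 hjfPhi.2 hcc]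
    have hinj : ∀ k ∈ (Finset.univ : Finset (Fin (h - n + 1))), ∀ k' ∈ Finset.univ,
        (k.1 + 1 + jf k - 1, n - jf k + 1) = (k'.1 + 1 + jf k' - 1, n - jf k' + 1) →
        k = k' := by
      intro k _ k' _ heq
      rw [Prod.mk.injEq] at heq
      have h1 := (hjfPhi.2 k).1
      have h2 := (hjfPhi.2 k').1
      by_contra hne
      have hvne : k.1 ≠ k'.1 := fun hcon => hne (Fin.ext hcon)
      rcases Nat.lt_or_ge k.1 k'.1 with hlt | hge
      · have := hjfPhi.1 (le_of_lt (show k < k' from hlt))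
        omega
      · have hlt' : k'.1 < k.1 := by omega
        have := hjfPhi.1 (le_of_lt (show k' < k from hlt'))
        omega
    rw [Finset.prod_image hinj]
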